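/- Let 0 = t_0 < t_1 < ⋯ < t_N = T be a mesh with steps τ_k = t_k − t_{k−1}, let α ∈ (0,1), and let A^{(n)}_{j} be discrete kernels satisfying assumptions A1 and A2 with constant π_A > 0. Then the complementary kernels satisfy Σ_{j=1}^{n} P^{(n)}_{n−j} ≤ π_A · ω_{1+α}(t_n) for all 1 ≤ n ≤ N. -/

import Mathlib

open Real Finset MeasureTheory

/-- The kernel `ω_μ(s) = s^(μ-1)/Γ(μ)`. -/
noncomputable def omegaK (μ s : ℝ) : ℝ := s ^ (μ - 1) / Real.Gamma μ

lemma beta_eval {α : ℝ} (hα0 : 0 < α) (hα1 : α < 1) {c : ℝ} (hc : 0 < c) :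
    ∫ s in (0:ℝ)..c, s ^ (α - 1) * (c - s) ^ (-α) = Real.Gamma α * Real.Gamma (1 - α) := by
  have h1 : (0:ℝ) < 1 - α := by linarith
  have hC := Complex.betaIntegral_scaled (α : ℂ) ((1 - α : ℝ) : ℂ) hc
  have hexp : (α : ℂ) + ((1-α:ℝ):ℂ) - 1 = 0 := by push_cast; ring
  rw [hexp, Complex.cpow_zero, one_mul] at hC
  have hG := Complex.Gamma_mul_Gamma_eq_betaIntegral (s := (α:ℂ)) (t := ((1-α:ℝ):ℂ))
    (by simpa using hα0) (by simpa using h1)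
  have hone : (α : ℂ) + ((1-α:ℝ):ℂ) = 1 := by push_cast; ring
  rw [hone, Complex.Gamma_one, one_mul] at hG
  have hcongr : (∫ x in (0:ℝ)..c, (x : ℂ) ^ ((α:ℂ) - 1) * ((c : ℂ) - x) ^ (((1-α:ℝ):ℂ) - 1))
      = ((∫ s in (0:ℝ)..c, s ^ (α - 1) * (c - s) ^ (-α) : ℝ) : ℂ) := by
    rw [← intervalIntegral.integral_ofReal]
    apply intervalIntegral.integral_congr
    intro x hx
    rw [Set.uIcc_of_le hc.le] at hx
    have hx0 : (0:ℝ) ≤ x := hx.1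
    have hxc : (0:ℝ) ≤ c - x := by linarith [hx.2]
    have e1 : ((α:ℂ) - 1) = ((α - 1 : ℝ) : ℂ) := by push_cast; ring
    have e2 : (((1-α:ℝ):ℂ) - 1) = ((-α : ℝ) : ℂ) := by push_cast; ring
    have e3 : ((c:ℂ) - x) = ((c - x : ℝ) : ℂ) := by push_cast; ring
    dsimp only
    rw [e1, e2, e3, ← Complex.ofReal_cpow hx0, ← Complex.ofReal_cpow hxc]
    push_cast
    ring
  rw [hcongr] at hC
  have hfin := hC.trans hG.symm
  rw [Complex.Gamma_ofReal, Complex.Gamma_ofReal, ← Complex.ofReal_mul] at hfin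
  exact_mod_cast hfin

lemma beta_integrable {α : ℝ} (hα0 : 0 < α) (hα1 : α < 1) {c : ℝ} (hc : 0 < c) :
    IntegrableOn (fun s => s ^ (α - 1) * (c - s) ^ (-α)) (Set.Ioc 0 c) := by
  have hu : Set.Ioc (0:ℝ) (c/2) ∪ Set.Ioc (c/2) c = Set.Ioc 0 c :=
    Set.Ioc_union_Ioc_eq_Ioc (by linarith) (by linarith)
  rw [← hu]
  apply MeasureTheory.IntegrableOn.union
  · have hg : IntegrableOn (fun s : ℝ => s ^ (α - 1)) (Set.Ioc 0 (c/2)) := by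
      rw [← intervalIntegrable_iff_integrableOn_Ioc_of_le (by linarith)]
      exact intervalIntegral.intervalIntegrable_rpow' (by linarith)
    have hbm : Integrable (fun s : ℝ => (c - s) ^ (-α) * s ^ (α - 1))
        (volume.restrict (Set.Ioc 0 (c/2))) := by
      apply hg.bdd_mul (c := (c/2) ^ (-α))
      · exact (by fun_prop : Measurable fun s : ℝ => (c - s) ^ (-α)).aestronglyMeasurable
      · refine (ae_restrict_iff' measurableSet_Ioc).2 (ae_of_all _ fun s hs => ?_)
        rw [Real.norm_eq_abs, abs_of_nonneg (Real.rpow_nonneg (by linarith [hs.2]) _)]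
        exact Real.rpow_le_rpow_of_nonpos (by linarith) (by linarith [hs.2]) (by linarith)
    exact hbm.congr (ae_of_all _ fun s => mul_comm _ _)
  · have hf : IntegrableOn (fun s : ℝ => (c - s) ^ (-α)) (Set.Ioc (c/2) c) := by
      have h0 : IntervalIntegrable (fun x : ℝ => x ^ (-α)) volume 0 (c/2) :=
        intervalIntegral.intervalIntegrable_rpow' (by linarith)
      have h2 := (h0.comp_sub_left c).symm
      have hI : IntervalIntegrable (fun s : ℝ => (c - s) ^ (-α)) volume (c/2) c := by
        have e1 : c - 0 = c := by ring
        have e2 : c - c/2 = c/2 := by ring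
        rw [e1, e2] at h2
        exact h2
      rw [← intervalIntegrable_iff_integrableOn_Ioc_of_le (by linarith)]
      exact hI
    apply hf.bdd_mul (c := (c/2) ^ (α - 1))
    · exact (by fun_prop : Measurable fun s : ℝ => s ^ (α - 1)).aestronglyMeasurable
    · refine (ae_restrict_iff' measurableSet_Ioc).2 (ae_of_all _ fun s hs => ?_)
      rw [Real.norm_eq_abs, abs_of_nonneg (Real.rpow_nonneg (by linarith [hs.1]) _)]
      exact Real.rpow_le_rpow_of_nonpos (by linarith) hs.1.le (by linarith)

lemma cheb_integral {a b : ℝ} (hab : a ≤ b) {f g : ℝ → ℝ}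
    (hfm : MonotoneOn f (Set.Ioo a b)) (hgm : AntitoneOn g (Set.Ioo a b))
    (hf : IntegrableOn f (Set.Ioo a b)) (hg : IntegrableOn g (Set.Ioo a b))
    (hfg : IntegrableOn (fun x => f x * g x) (Set.Ioo a b)) :
    (b - a) * ∫ x in Set.Ioo a b, f x * g x ≤
      (∫ x in Set.Ioo a b, f x) * ∫ x in Set.Ioo a b, g x := by
  set μ := volume.restrict (Set.Ioo a b) with hμ
  haveI : IsFiniteMeasure μ := by
    constructor
    rw [hμ, Measure.restrict_apply_univ, Real.volume_Ioo]
    exact ENNReal.ofReal_lt_top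
  have h1 : Integrable (fun z : ℝ × ℝ => f z.1 * g z.2) (μ.prod μ) := hf.mul_prod hg
  have h2 : Integrable (fun z : ℝ × ℝ => f z.2 * g z.1) (μ.prod μ) := by
    have := hg.mul_prod hf
    exact this.congr (ae_of_all _ fun z => mul_comm _ _)
  have h3 : Integrable (fun z : ℝ × ℝ => f z.1 * g z.1) (μ.prod μ) := by
    have := hfg.mul_prod (integrable_const (μ := μ) (1:ℝ))
    simpa using this
  have h4 : Integrable (fun z : ℝ × ℝ => f z.2 * g z.2) (μ.prod μ) := by
    have := (integrable_const (μ := μ) (1:ℝ)).mul_prod hfg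
    simpa using this
  have hμ1 : ∫ _x, (1:ℝ) ∂μ = b - a := by
    rw [integral_const, smul_eq_mul, mul_one, hμ, measureReal_def, Measure.restrict_apply_univ, Real.volume_Ioo,
      ENNReal.toReal_ofReal (by linarith)]
  have e1 : ∫ z, f z.1 * g z.2 ∂(μ.prod μ) = (∫ x, f x ∂μ) * ∫ x, g x ∂μ :=
    integral_prod_mul f g
  have e2 : ∫ z, f z.2 * g z.1 ∂(μ.prod μ) = (∫ x, f x ∂μ) * ∫ x, g x ∂μ := by
    simp_rw [fun z : ℝ × ℝ => (mul_comm (f z.2) (g z.1) : f z.2 * g z.1 = g z.1 * f z.2)]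
    rw [integral_prod_mul g f]; ring
  have e3 : ∫ z, f z.1 * g z.1 ∂(μ.prod μ) = (b - a) * ∫ x, f x * g x ∂μ := by
    have := integral_prod_mul (μ := μ) (ν := μ) (fun x => f x * g x) (fun _ => (1:ℝ))
    simpa [hμ1, mul_comm] using this
  have e4 : ∫ z, f z.2 * g z.2 ∂(μ.prod μ) = (b - a) * ∫ x, f x * g x ∂μ := by
    have := integral_prod_mul (μ := μ) (ν := μ) (fun _ => (1:ℝ)) (fun x => f x * g x)
    simpa [hμ1, mul_comm] using this
  have hnn : 0 ≤ ∫ z, (f z.1 - f z.2) * (g z.2 - g z.1) ∂(μ.prod μ) := by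
    apply integral_nonneg_of_ae
    rw [hμ, Measure.prod_restrict]
    refine ae_restrict_of_forall_mem (measurableSet_Ioo.prod measurableSet_Ioo) fun z hz => ?_
    rcases hz with ⟨hz1, hz2⟩
    show (0:ℝ) ≤ (f z.1 - f z.2) * (g z.2 - g z.1)
    rcases le_total z.1 z.2 with h | h
    · have := hfm hz1 hz2 h
      have := hgm hz1 hz2 h
      nlinarith
    · have := hfm hz2 hz1 h
      have := hgm hz2 hz1 h
      nlinarith
  have expand : ∫ z, (f z.1 - f z.2) * (g z.2 - g z.1) ∂(μ.prod μ)
      = 2 * ((∫ x, f x ∂μ) * ∫ x, g x ∂μ) - 2 * ((b - a) * ∫ x, f x * g x ∂μ) := by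
    have hfun : (fun z : ℝ × ℝ => (f z.1 - f z.2) * (g z.2 - g z.1))
        = fun z => (f z.1 * g z.2 + f z.2 * g z.1) - (f z.1 * g z.1 + f z.2 * g z.2) := by
      funext z; ring
    have h12 : Integrable (fun z : ℝ × ℝ => f z.1 * g z.2 + f z.2 * g z.1) (μ.prod μ) :=
      h1.add h2
    have h34 : Integrable (fun z : ℝ × ℝ => f z.1 * g z.1 + f z.2 * g z.2) (μ.prod μ) :=
      h3.add h4
    rw [hfun, integral_sub h12 h34, integral_add h1 h2, integral_add h3 h4,
      e1, e2, e3, e4]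
    ring
  rw [expand] at hnn
  linarith
theorem complementary_kernel_sum_bound
    (T : ℝ) (hT : 0 < T) (N : ℕ) (hN : 1 ≤ N)
    (t : ℕ → ℝ) (ht0 : t 0 = 0) (htN : t N = T)
    (hmesh : ∀ k, 1 ≤ k → k ≤ N → t (k - 1) < t k)
    (α : ℝ) (hα0 : 0 < α) (hα1 : α < 1)
    (A : ℕ → ℕ → ℝ)
    -- assumption A1
    (hA1 : ∀ n k, 2 ≤ k → k ≤ n → n ≤ N → A n (k - 2) ≥ A n (k - 1) ∧ 0 < A n (k - 1))
    (hApos : ∀ n, 1 ≤ n → n ≤ N → 0 < A n 0)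
    -- assumption A2 with constant πA
    (πA : ℝ) (hπA : 0 < πA)
    (hA2 : ∀ n k, 1 ≤ k → k ≤ n → n ≤ N →
      A n (n - k) ≥ (1 / (πA * (t k - t (k - 1)))) *
        ∫ s in (t (k - 1))..(t k), omegaK (1 - α) (t n - s))
    -- the complementary kernel `P n j = P^{(n)}_{n-j}`
    (P : ℕ → ℕ → ℝ)
    (hPdiag : ∀ n, 1 ≤ n → n ≤ N → P n n = 1 / A n 0)
    (hPrec : ∀ n j, 1 ≤ j → j + 1 ≤ n → n ≤ N →
      P n j = (1 / A j 0) *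
        ∑ k ∈ Finset.Icc (j + 1) n, (A k (k - j - 1) - A k (k - j)) * P n k) :
    ∀ n, 1 ≤ n → n ≤ N →
      ∑ j ∈ Finset.Icc 1 n, P n j ≤ πA * omegaK (1 + α) (t n) := by
  have hΓα : 0 < Real.Gamma α := Real.Gamma_pos_of_pos hα0
  have hΓ1α : 0 < Real.Gamma (1 - α) := Real.Gamma_pos_of_pos (by linarith)
  -- mesh monotonicity
  have tmono : ∀ j : ℕ, j ≤ N → ∀ i, i ≤ j → t i ≤ t j := by
    intro j
    induction j with
    | zero => intro _ i hi; obtain rfl : i = 0 := Nat.le_zero.mp hi; exact le_rfl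
    | succ m ih =>
      intro hjN i hi
      rcases Nat.eq_or_lt_of_le hi with rfl | h
      · exact le_rfl
      · have h2 := hmesh (m+1) (by omega) hjN
        have e : m + 1 - 1 = m := by omega
        rw [e] at h2
        exact le_trans (ih (by omega) i (by omega)) h2.le
  have tnonneg : ∀ j : ℕ, j ≤ N → 0 ≤ t j := by
    intro j hj
    have := tmono j hj 0 (Nat.zero_le _)
    rw [ht0] at this; exact this
  have tpos : ∀ j : ℕ, 1 ≤ j → j ≤ N → 0 < t j := by
    intro j h1 hj
    have h2 := hmesh j h1 hj
    have h3 := tnonneg (j-1) (by omega)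
    linarith
  -- interval integrability of omegaK α
  have hωint : ∀ a b : ℝ, IntervalIntegrable (fun s => omegaK α s) volume a b := by
    intro a b
    simp only [omegaK]
    exact (intervalIntegral.intervalIntegrable_rpow' (by linarith)).div_const _
  -- q k
  set q : ℕ → ℝ := fun k => ∫ s in t (k-1)..t k, omegaK α s with hqdef
  have hq_nonneg : ∀ k, 1 ≤ k → k ≤ N → 0 ≤ q k := by
    intro k h1 hk
    apply intervalIntegral.integral_nonneg (hmesh k h1 hk).le
    intro s hs
    have hs0 : 0 ≤ s := le_trans (tnonneg (k-1) (by omega)) hs.1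
    exact div_nonneg (Real.rpow_nonneg hs0 _) hΓα.le
  -- sum of q over 1..m
  have hqsum : ∀ m : ℕ, 1 ≤ m → m ≤ N →
      ∑ k ∈ Finset.Icc 1 m, q k = omegaK (1 + α) (t m) := by
    intro m h1 hm
    have hadj : ∑ i ∈ Finset.range m, (∫ s in t i..t (i+1), omegaK α s)
        = ∫ s in (t 0)..(t m), omegaK α s :=
      intervalIntegral.sum_integral_adjacent_intervals (fun k _ => hωint _ _)
    have hre : ∑ k ∈ Finset.Icc 1 m, q k
        = ∑ i ∈ Finset.range m, (∫ s in t i..t (i+1), omegaK α s) := by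
      rw [show Finset.Icc 1 m = Finset.Ico 1 (m+1) by rw [Finset.Ico_add_one_right_eq_Icc],
        Finset.sum_Ico_eq_sum_range]
      apply Finset.sum_congr (by congr 1 <;> omega)
      intro i _
      have e1 : 1 + i - 1 = i := by omega
      have e2 : 1 + i = i + 1 := by omega
      rw [hqdef]
      dsimp only
      rw [e1, e2]
    rw [hre, hadj, ht0]
    have hc : 0 < t m := tpos m h1 hm
    simp only [omegaK]
    rw [intervalIntegral.integral_div, integral_rpow (Or.inl (by linarith))]
    rw [Real.zero_rpow (by rw [show α - 1 + 1 = α by ring]; exact hα0.ne')]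
    have eα : α - 1 + 1 = α := by ring
    rw [eα]
    have e1 : (1:ℝ) + α - 1 = α := by ring
    rw [e1]
    rw [show (1:ℝ) + α = α + 1 by ring, Real.Gamma_add_one hα0.ne', sub_zero, div_div]
  -- pointwise form of the product integrand
  have hfe : ∀ c s : ℝ, omegaK (1-α) (c - s) * omegaK α s
      = s ^ (α-1) * (c-s) ^ (-α) * (Real.Gamma (1-α) * Real.Gamma α)⁻¹ := by
    intro c s
    simp only [omegaK]
    rw [show (1:ℝ) - α - 1 = -α by ring]
    field_simp
  -- interval integrability of product on subintervals of [0, c]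
  have hprod_int : ∀ c a b : ℝ, 0 < c → 0 ≤ a → a ≤ b → b ≤ c →
      IntervalIntegrable (fun s => omegaK (1-α) (c - s) * omegaK α s) volume a b := by
    intro c a b hc ha hab hbc
    rw [intervalIntegrable_iff_integrableOn_Ioc_of_le hab]
    have hsub : Set.Ioc a b ⊆ Set.Ioc 0 c := Set.Ioc_subset_Ioc ha hbc
    have h := ((beta_integrable hα0 hα1 hc).mono_set hsub).mul_const
      ((Real.Gamma (1-α) * Real.Gamma α)⁻¹)
    exact h.congr (ae_of_all _ fun s => (hfe c s).symm)
  -- the beta identity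
  have hbeta : ∀ j : ℕ, 1 ≤ j → j ≤ N →
      (∫ s in (0:ℝ)..t j, omegaK (1-α) (t j - s) * omegaK α s) = 1 := by
    intro j h1 hj
    have hc : 0 < t j := tpos j h1 hj
    have : (∫ s in (0:ℝ)..t j, omegaK (1-α) (t j - s) * omegaK α s)
        = (∫ s in (0:ℝ)..t j, s ^ (α-1) * (t j - s) ^ (-α))
          * (Real.Gamma (1-α) * Real.Gamma α)⁻¹ := by
      rw [← intervalIntegral.integral_mul_const]
      exact intervalIntegral.integral_congr fun s _ => hfe (t j) s
    rw [this, beta_eval hα0 hα1 hc]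
    field_simp
  -- Chebyshev estimate on each subinterval
  have hcheb : ∀ j k : ℕ, 1 ≤ k → k ≤ j → j ≤ N →
      (∫ s in t (k-1)..t k, omegaK (1-α) (t j - s) * omegaK α s)
        ≤ πA * (A j (j-k) * q k) := by
    intro j k hk1 hkj hjN
    have hab : t (k-1) < t k := hmesh k hk1 (le_trans hkj hjN)
    have ha0 : 0 ≤ t (k-1) := tnonneg (k-1) (by omega)
    have hbc : t k ≤ t j := tmono j hjN k hkj
    have hcpos : 0 < t j := tpos j (by omega) hjN
    set c := t j with hcdef
    set a := t (k-1) with hadef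
    set b := t k with hbdef
    have iconv : ∀ h : ℝ → ℝ, (∫ x in Set.Ioo a b, h x) = ∫ x in a..b, h x := by
      intro h
      rw [intervalIntegral.integral_of_le hab.le,
        ← MeasureTheory.integral_Ioc_eq_integral_Ioo]
    have hfm : MonotoneOn (fun s => omegaK (1-α) (c - s)) (Set.Ioo a b) := by
      intro x hx y hy hxy
      simp only [omegaK]
      have h1 : 0 < c - y := by linarith [hy.2]
      have h2 : (c - x) ^ ((1:ℝ) - α - 1) ≤ (c - y) ^ ((1:ℝ) - α - 1) := by
        rw [show (1:ℝ) - α - 1 = -α by ring]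
        exact Real.rpow_le_rpow_of_nonpos h1 (by linarith) (by linarith)
      exact div_le_div_of_nonneg_right h2 hΓ1α.le
    have hgm : AntitoneOn (fun s => omegaK α s) (Set.Ioo a b) := by
      intro x hx y hy hxy
      simp only [omegaK]
      have h1 : 0 < x := by linarith [hx.1]
      have h2 : y ^ (α - 1) ≤ x ^ (α - 1) := by
        exact Real.rpow_le_rpow_of_nonpos h1 hxy (by linarith)
      exact div_le_div_of_nonneg_right h2 hΓα.le
    have hfint : IntegrableOn (fun s => omegaK (1-α) (c - s)) (Set.Ioo a b) := by
      have h0 : IntervalIntegrable (fun x : ℝ => x ^ (-α)) volume (c - a) (c - b) :=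
        intervalIntegral.intervalIntegrable_rpow' (by linarith)
      have h2 := h0.comp_sub_left c
      rw [show c - (c - a) = a by ring, show c - (c - b) = b by ring] at h2
      have h3 := h2.div_const (Real.Gamma (1 - α))
      have hfeq : (fun s => omegaK (1-α) (c - s))
          = fun s => (c - s) ^ (-α) / Real.Gamma (1 - α) := by
        funext s
        simp only [omegaK]
        rw [show (1:ℝ) - α - 1 = -α by ring]
      rw [hfeq]
      exact ((intervalIntegrable_iff_integrableOn_Ioc_of_le hab.le).1 h3).mono_set
        Set.Ioo_subset_Ioc_self
    have hgint : IntegrableOn (fun s => omegaK α s) (Set.Ioo a b) :=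
      ((intervalIntegrable_iff_integrableOn_Ioc_of_le hab.le).1 (hωint a b)).mono_set
        Set.Ioo_subset_Ioc_self
    have hfgint : IntegrableOn
        (fun s => omegaK (1-α) (c - s) * omegaK α s) (Set.Ioo a b) :=
      ((intervalIntegrable_iff_integrableOn_Ioc_of_le hab.le).1
        (hprod_int c a b hcpos ha0 hab.le hbc)).mono_set Set.Ioo_subset_Ioc_self
    have hch := cheb_integral hab.le hfm hgm hfint hgint hfgint
    rw [iconv, iconv, iconv] at hch
    have hA2' := hA2 j k hk1 hkj hjN
    have hτ : 0 < b - a := by linarith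
    have hIf : (∫ s in a..b, omegaK (1-α) (c - s)) ≤ πA * (b - a) * A j (j-k) := by
      calc (∫ s in a..b, omegaK (1-α) (c - s))
          = (πA * (b - a)) * ((1 / (πA * (b - a))) * ∫ s in a..b, omegaK (1-α) (c - s)) := by
            field_simp
        _ ≤ (πA * (b - a)) * A j (j-k) := by
            apply mul_le_mul_of_nonneg_left hA2' (by positivity)
        _ = πA * (b - a) * A j (j-k) := by ring
    have hq0 : 0 ≤ q k := hq_nonneg k hk1 (le_trans hkj hjN)
    have hqk : q k = ∫ s in a..b, omegaK α s := rfl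
    have hgnn : 0 ≤ ∫ s in a..b, omegaK α s := by rw [← hqk]; exact hq0
    have h2 : (∫ s in a..b, omegaK (1-α) (c - s)) * (∫ s in a..b, omegaK α s)
        ≤ (πA * (b - a) * A j (j-k)) * ∫ s in a..b, omegaK α s :=
      mul_le_mul_of_nonneg_right hIf hgnn
    have hfinal : (b - a) * (∫ s in a..b, omegaK (1-α) (c - s) * omegaK α s)
        ≤ (b - a) * (πA * (A j (j-k) * q k)) := by
      rw [hqk]
      calc (b - a) * (∫ s in a..b, omegaK (1-α) (c - s) * omegaK α s)
          ≤ (∫ s in a..b, omegaK (1-α) (c - s)) * (∫ s in a..b, omegaK α s) := hch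
        _ ≤ (πA * (b - a) * A j (j-k)) * ∫ s in a..b, omegaK α s := h2
        _ = (b - a) * (πA * (A j (j-k) * ∫ s in a..b, omegaK α s)) := by ring
    exact le_of_mul_le_mul_left hfinal hτ
  -- key inequality : 1 ≤ πA * ∑ A q
  have key1 : ∀ j : ℕ, 1 ≤ j → j ≤ N →
      (1:ℝ) ≤ πA * ∑ k ∈ Finset.Icc 1 j, A j (j-k) * q k := by
    intro j h1 hj
    have hadj : ∑ i ∈ Finset.range j,
        (∫ s in t i..t (i+1), omegaK (1-α) (t j - s) * omegaK α s)
        = ∫ s in (t 0)..(t j), omegaK (1-α) (t j - s) * omegaK α s := by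
      apply intervalIntegral.sum_integral_adjacent_intervals
      intro k hk
      exact hprod_int (t j) (t k) (t (k+1)) (tpos j h1 hj) (tnonneg k (by omega))
        (tmono (k+1) (by omega) k (by omega)) (tmono j hj (k+1) (by omega))
    have hre : ∑ k ∈ Finset.Icc 1 j,
        (∫ s in t (k-1)..t k, omegaK (1-α) (t j - s) * omegaK α s)
        = ∑ i ∈ Finset.range j,
          (∫ s in t i..t (i+1), omegaK (1-α) (t j - s) * omegaK α s) := by
      rw [show Finset.Icc 1 j = Finset.Ico 1 (j+1) by rw [Finset.Ico_add_one_right_eq_Icc],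
        Finset.sum_Ico_eq_sum_range]
      apply Finset.sum_congr (by congr 1 <;> omega)
      intro i _
      have e1 : 1 + i - 1 = i := by omega
      have e2 : 1 + i = i + 1 := by omega
      rw [e1, e2]
    have hsum_le : ∑ k ∈ Finset.Icc 1 j,
        (∫ s in t (k-1)..t k, omegaK (1-α) (t j - s) * omegaK α s)
        ≤ ∑ k ∈ Finset.Icc 1 j, πA * (A j (j-k) * q k) := by
      apply Finset.sum_le_sum
      intro k hk
      rw [Finset.mem_Icc] at hk
      exact hcheb j k hk.1 hk.2 hj
    calc (1:ℝ) = ∫ s in (t 0)..(t j), omegaK (1-α) (t j - s) * omegaK α s := by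
              rw [ht0, hbeta j h1 hj]
      _ = ∑ k ∈ Finset.Icc 1 j,
            (∫ s in t (k-1)..t k, omegaK (1-α) (t j - s) * omegaK α s) := by
              rw [hre, hadj]
      _ ≤ ∑ k ∈ Finset.Icc 1 j, πA * (A j (j-k) * q k) := hsum_le
      _ = πA * ∑ k ∈ Finset.Icc 1 j, A j (j-k) * q k := by rw [← Finset.mul_sum]
  intro n hn1 hnN
  -- nonnegativity of P
  have Pnonneg : ∀ j, 1 ≤ j → j ≤ n → 0 ≤ P n j := by
    have main : ∀ d j, 1 ≤ j → j ≤ n → n - j = d → 0 ≤ P n j := by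
      intro d
      induction d using Nat.strong_induction_on with
      | _ d ih =>
        intro j hj1 hjn hd
        rcases eq_or_lt_of_le hjn with rfl | hlt
        · rw [hPdiag j hn1 hnN]
          have := hApos j hn1 hnN
          positivity
        · rw [hPrec n j hj1 hlt hnN]
          have hAj0 : 0 < A j 0 := hApos j hj1 (by omega)
          apply mul_nonneg (by positivity)
          apply Finset.sum_nonneg
          intro k hk
          rw [Finset.mem_Icc] at hk
          apply mul_nonneg
          · have h := hA1 k (k - j + 1) (by omega) (by omega) (le_trans hk.2 hnN)
            have e1 : k - j + 1 - 2 = k - j - 1 := by omega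
            have e2 : k - j + 1 - 1 = k - j := by omega
            rw [e1, e2] at h
            linarith [h.1]
          · exact ih (n - k) (by omega) k (by omega) hk.2 rfl
    intro j h1 h2
    exact main (n - j) j h1 h2 rfl
  have hApos' : ∀ j, 1 ≤ j → j ≤ n → 0 < A j 0 := fun j h1 h2 =>
    hApos j h1 (le_trans h2 hnN)
  -- complementary identity
  have Sid : ∀ k, 1 ≤ k → k ≤ n → ∑ j ∈ Finset.Icc k n, P n j * A j (j-k) = 1 := by
    have main : ∀ d k, 1 ≤ k → k ≤ n → n - k = d →
        ∑ j ∈ Finset.Icc k n, P n j * A j (j-k) = 1 := by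
      intro d
      induction d using Nat.strong_induction_on with
      | _ d ih =>
        intro k hk1 hkn hd
        rcases eq_or_lt_of_le hkn with rfl | hlt
        · rw [Finset.Icc_self, Finset.sum_singleton, Nat.sub_self,
            hPdiag k hn1 hnN, one_div, inv_mul_cancel₀ (hApos' k hk1 le_rfl).ne']
        · rw [Finset.Icc_eq_cons_Ioc hkn, Finset.sum_cons]
          have hPk : P n k * A k (k - k)
              = ∑ j ∈ Finset.Icc (k+1) n, (A j (j - k - 1) - A j (j - k)) * P n j := by
            rw [Nat.sub_self, hPrec n k hk1 hlt hnN]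
            have hA0 : A k 0 ≠ 0 := (hApos' k hk1 hkn).ne'
            field_simp
          rw [hPk, ← Finset.Icc_add_one_left_eq_Ioc, ← Finset.sum_add_distrib]
          have : ∀ j ∈ Finset.Icc (k+1) n,
              (A j (j - k - 1) - A j (j - k)) * P n j + P n j * A j (j - k)
              = P n j * A j (j - (k+1)) := by
            intro j hj
            rw [Finset.mem_Icc] at hj
            have e : j - k - 1 = j - (k+1) := by omega
            rw [e]; ring
          rw [Finset.sum_congr rfl this]
          exact ih (n - (k+1)) (by omega) (k+1) (by omega) hlt rfl
    intro k h1 h2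
    exact main (n - k) k h1 h2 rfl
  -- main chain
  have step1 : ∑ j ∈ Finset.Icc 1 n, P n j
      ≤ ∑ j ∈ Finset.Icc 1 n, P n j * (πA * ∑ k ∈ Finset.Icc 1 j, A j (j-k) * q k) := by
    apply Finset.sum_le_sum
    intro j hj
    rw [Finset.mem_Icc] at hj
    exact le_mul_of_one_le_right (Pnonneg j hj.1 hj.2) (key1 j hj.1 (le_trans hj.2 hnN))
  have step2 : ∑ j ∈ Finset.Icc 1 n, P n j * (πA * ∑ k ∈ Finset.Icc 1 j, A j (j-k) * q k)
      = πA * ∑ j ∈ Finset.Icc 1 n, ∑ k ∈ Finset.Icc 1 j, P n j * (A j (j-k) * q k) := by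
    simp only [Finset.mul_sum]
    apply Finset.sum_congr rfl
    intro j _
    apply Finset.sum_congr rfl
    intro k _
    ring
  have step3 : ∑ j ∈ Finset.Icc 1 n, ∑ k ∈ Finset.Icc 1 j, P n j * (A j (j-k) * q k)
      = ∑ k ∈ Finset.Icc 1 n, ∑ j ∈ Finset.Icc k n, P n j * (A j (j-k) * q k) := by
    apply Finset.sum_comm'
    intro j k
    simp only [Finset.mem_Icc]
    omega
  have step4 : ∀ k, 1 ≤ k → k ≤ n →
      ∑ j ∈ Finset.Icc k n, P n j * (A j (j-k) * q k) = q k := by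
    intro k h1 h2
    have : ∀ j ∈ Finset.Icc k n, P n j * (A j (j-k) * q k) = (P n j * A j (j-k)) * q k := by
      intro j _; ring
    rw [Finset.sum_congr rfl this, ← Finset.sum_mul, Sid k h1 h2, one_mul]
  calc ∑ j ∈ Finset.Icc 1 n, P n j
      ≤ ∑ j ∈ Finset.Icc 1 n, P n j * (πA * ∑ k ∈ Finset.Icc 1 j, A j (j-k) * q k) := step1
    _ = πA * ∑ j ∈ Finset.Icc 1 n, ∑ k ∈ Finset.Icc 1 j, P n j * (A j (j-k) * q k) := step2
    _ = πA * ∑ k ∈ Finset.Icc 1 n, ∑ j ∈ Finset.Icc k n, P n j * (A j (j-k) * q k) := by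
        rw [step3]
    _ = πA * ∑ k ∈ Finset.Icc 1 n, q k := by
        congr 1
        apply Finset.sum_congr rfl
        intro k hk
        rw [Finset.mem_Icc] at hk
        exact step4 k hk.1 hk.2
    _ = πA * omegaK (1 + α) (t n) := by rw [hqsum n hn1 hnN]
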